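/- Let 𝒯 be a set of transpositions of Sym(n), n ≥ 3, whose transposition generating graph G(𝒯) is connected and has m edges. Then the Cayley graph Cay(Sym(n),𝒯) is maximally connected: its vertex connectivity equals m, its common vertex degree. -/
import Mathlib


/-- The transposition generating graph `G(𝒯)` of a set `T` of transpositions of `Sym(n)`:
vertices `{1,…,n}` (modeled as `Fin n`), with an edge `i j` iff the transposition
`(i j)` belongs to `T`. -/
def transGraph {n : ℕ} (T : Set (Equiv.Perm (Fin n))) : SimpleGraph (Fin n) :=
  SimpleGraph.fromRel (fun i j => Equiv.swap i j ∈ T)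

/-- The Cayley graph `Cay(Sym(n), T)`: vertices are permutations, and `g, h` are
adjacent iff `h = g * t` for some `t ∈ T`. -/
def cayley {n : ℕ} (T : Set (Equiv.Perm (Fin n))) : SimpleGraph (Equiv.Perm (Fin n)) :=
  SimpleGraph.fromRel (fun g h => ∃ t ∈ T, h = g * t)

/-- `G` is a `k`-tree: there is a construction ordering of the vertices in which the
first `k+1` vertices are mutually adjacent, and each later vertex is joined to exactly
`k` mutually adjacent earlier vertices. -/
def IsKTree (k : ℕ) {V : Type*} [Fintype V] (G : SimpleGraph V) : Prop :=
  k + 1 ≤ Fintype.card V ∧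
  ∃ e : Fin (Fintype.card V) ≃ V,
    (∀ i j : Fin (Fintype.card V), j < i → (i : ℕ) ≤ k → G.Adj (e i) (e j)) ∧
    ∀ i : Fin (Fintype.card V), k + 1 ≤ (i : ℕ) →
      {j : Fin (Fintype.card V) | j < i ∧ G.Adj (e i) (e j)}.ncard = k ∧
      {j : Fin (Fintype.card V) | j < i ∧ G.Adj (e i) (e j)}.Pairwise
        (fun j₁ j₂ => G.Adj (e j₁) (e j₂))

/-- `F` is an `R_k`-vertex-cut of `G`: `G - F` is disconnected and every vertex of
`G - F` has at least `k` neighbors in `G - F`. -/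
def IsRkCut {V : Type*} (G : SimpleGraph V) (k : ℕ) (F : Set V) : Prop :=
  ¬ (G.induce (Fᶜ : Set V)).Connected ∧
  ∀ v : V, v ∉ F → k ≤ {u : V | u ∉ F ∧ G.Adj v u}.ncard

/-- The `R_k`-vertex-connectivity `κ^k(G)`: the minimum cardinality of an
`R_k`-vertex-cut of `G`. -/
noncomputable def rkConn {V : Type*} (G : SimpleGraph V) (k : ℕ) : ℕ :=
  sInf {m : ℕ | ∃ F : Set V, IsRkCut G k F ∧ F.ncard = m}

/-- The vertex connectivity of a graph: the minimum cardinality of a set of vertices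
whose deletion disconnects the graph or reduces it to fewer than two vertices. -/
noncomputable def vertexConn {V : Type*} (G : SimpleGraph V) : ℕ :=
  sInf {m : ℕ | ∃ S : Set V, S.ncard = m ∧
    (¬ (G.induce (Sᶜ : Set V)).Connected ∨ (Sᶜ : Set V).ncard < 2)}

section CayleyApp

open Equiv

variable {n : ℕ} (T : Set (Equiv.Perm (Fin n)))

lemma transGraph_adj {i j : Fin n} :
    (transGraph T).Adj i j ↔ i ≠ j ∧ Equiv.swap i j ∈ T := by
  rw [transGraph, SimpleGraph.fromRel_adj]
  constructor
  · rintro ⟨hne, h | h⟩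
    · exact ⟨hne, h⟩
    · exact ⟨hne, by rwa [Equiv.swap_comm]⟩
  · rintro ⟨hne, h⟩
    exact ⟨hne, Or.inl h⟩

lemma cayley_adj (hT : ∀ t ∈ T, Equiv.Perm.IsSwap t) {g h : Equiv.Perm (Fin n)} :
    (cayley T).Adj g h ↔ g ≠ h ∧ ∃ t ∈ T, h = g * t := by
  rw [cayley, SimpleGraph.fromRel_adj]
  constructor
  · rintro ⟨hne, h1 | h1⟩
    · exact ⟨hne, h1⟩
    · obtain ⟨t, ht, heq⟩ := h1
      refine ⟨hne, t, ht, ?_⟩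
      obtain ⟨i, j, hij, rfl⟩ := hT t ht
      rw [heq, mul_assoc, Equiv.swap_mul_self, mul_one]
  · rintro ⟨hne, ht⟩
    exact ⟨hne, Or.inl ht⟩

lemma T_ncard_eq (hT : ∀ t ∈ T, Equiv.Perm.IsSwap t) :
    T.ncard = (transGraph T).edgeSet.ncard := by
  set f : Sym2 (Fin n) → Equiv.Perm (Fin n) :=
    Sym2.lift ⟨fun i j => Equiv.swap i j, fun i j => Equiv.swap_comm i j⟩ with hf
  have himg : f '' (transGraph T).edgeSet = T := by
    ext t
    constructor
    · rintro ⟨e, he, rfl⟩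
      induction e using Sym2.ind with
      | _ i j =>
        rw [SimpleGraph.mem_edgeSet] at he
        have h := (transGraph_adj T).1 he
        simpa [hf] using h.2
    · intro ht
      obtain ⟨i, j, hij, rfl⟩ := hT t ht
      exact ⟨s(i, j), (SimpleGraph.mem_edgeSet _).2 ((transGraph_adj T).2 ⟨hij, ht⟩),
        by simp [hf]⟩
  have hinj : Set.InjOn f (transGraph T).edgeSet := by
    intro e1 he1 e2 he2 heq
    induction e1 using Sym2.ind with
    | _ i j =>
      induction e2 using Sym2.ind with
      | _ k l =>
        rw [SimpleGraph.mem_edgeSet] at he1 he2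
        have hij : i ≠ j := ((transGraph_adj T).1 he1).1
        have hkl : k ≠ l := ((transGraph_adj T).1 he2).1
        simp only [hf, Sym2.lift_mk] at heq
        have hk : Equiv.swap i j k = l := by rw [heq]; exact Equiv.swap_apply_left k l
        rcases eq_or_ne k i with rfl | hki
        · rw [Equiv.swap_apply_left] at hk
          rw [hk]
        · rcases eq_or_ne k j with rfl | hkj
          · rw [Equiv.swap_apply_right] at hk
            rw [← hk]
            exact Sym2.eq_swap
          · rw [Equiv.swap_apply_of_ne_of_ne hki hkj] at hk
            exact absurd hk hkl
  conv_lhs => rw [← himg]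
  exact Set.ncard_image_of_injOn hinj

lemma cayley_degree (hT : ∀ t ∈ T, Equiv.Perm.IsSwap t)
    [DecidableRel (cayley T).Adj] [Fintype T] (g : Equiv.Perm (Fin n)) :
    (cayley T).degree g = T.ncard := by
  classical
  have hset : (cayley T).neighborFinset g = T.toFinset.image (fun t => g * t) := by
    ext h
    rw [SimpleGraph.mem_neighborFinset, cayley_adj T hT]
    simp only [Finset.mem_image, Set.mem_toFinset]
    constructor
    · rintro ⟨hne, t, ht, rfl⟩
      exact ⟨t, ht, rfl⟩
    · rintro ⟨t, ht, rfl⟩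
      refine ⟨?_, t, ht, rfl⟩
      obtain ⟨i, j, hij, rfl⟩ := hT t ht
      intro hgg
      exact hij (Equiv.mul_swap_eq_iff.1 hgg.symm)
  rw [← SimpleGraph.card_neighborFinset_eq_degree, hset,
    Finset.card_image_of_injective _ (mul_right_injective g), Set.ncard_eq_toFinset_card']

lemma cayley_tf (hT : ∀ t ∈ T, Equiv.Perm.IsSwap t) :
    ∀ a b c, (cayley T).Adj a b → (cayley T).Adj b c → (cayley T).Adj a c → False := by
  have hsign : ∀ {g h}, (cayley T).Adj g h →
      Equiv.Perm.sign h = - Equiv.Perm.sign g := by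
    intro g h hadj
    obtain ⟨hne, t, ht, rfl⟩ := (cayley_adj T hT).1 hadj
    obtain ⟨i, j, hij, rfl⟩ := hT t ht
    rw [map_mul, Equiv.Perm.sign_swap hij, mul_neg_one]
  intro a b c h1 h2 h3
  have e1 := hsign h1
  have e2 := hsign h2
  have e3 := hsign h3
  rw [e1, neg_neg] at e2
  rw [e2] at e3
  rcases Int.units_eq_one_or (Equiv.Perm.sign a) with h | h <;> rw [h] at e3 <;>
    exact absurd e3 (by decide)

def mulLeftIso (a : Equiv.Perm (Fin n)) : cayley T ≃g cayley T where
  toEquiv := Equiv.mulLeft a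
  map_rel_iff' := by
    intro g h
    have key : ∀ g h : Equiv.Perm (Fin n),
        (∃ t ∈ T, a * h = a * g * t) ↔ (∃ t ∈ T, h = g * t) := by
      intro g h
      constructor <;> rintro ⟨t, ht, he⟩ <;> refine ⟨t, ht, ?_⟩
      · rw [mul_assoc] at he
        exact mul_left_cancel he
      · rw [mul_assoc, ← he]
    show (cayley T).Adj (a * g) (a * h) ↔ (cayley T).Adj g h
    rw [cayley, SimpleGraph.fromRel_adj, SimpleGraph.fromRel_adj]
    constructor
    · rintro ⟨hne, h1 | h1⟩
      · exact ⟨fun he => hne (by rw [he]), Or.inl ((key g h).1 h1)⟩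
      · exact ⟨fun he => hne (by rw [he]), Or.inr ((key h g).1 h1)⟩
    · rintro ⟨hne, h1 | h1⟩
      · exact ⟨fun he => hne (mul_left_cancel he), Or.inl ((key g h).2 h1)⟩
      · exact ⟨fun he => hne (mul_left_cancel he), Or.inr ((key h g).2 h1)⟩

lemma closure_T_top (hconn : (transGraph T).Connected) :
    Subgroup.closure T = ⊤ := by
  have key : ∀ {i j : Fin n}, (transGraph T).Walk i j → i ≠ j →
      Equiv.swap i j ∈ Subgroup.closure T := by
    intro i j w
    induction w with
    | nil => exact fun h => absurd rfl h
    | @cons i k j hadj p ih =>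
      intro hne
      have hik := (transGraph_adj T).1 hadj
      have h1 : Equiv.swap i k ∈ Subgroup.closure T := Subgroup.subset_closure hik.2
      rcases eq_or_ne k j with rfl | hkj
      · exact h1
      · have h2 := ih hkj
        have hfj : Equiv.swap i k j = j :=
          Equiv.swap_apply_of_ne_of_ne (Ne.symm hne) (Ne.symm hkj)
        have hconj := Equiv.swap_apply_apply (Equiv.swap i k) k j
        rw [Equiv.swap_apply_right, hfj] at hconj
        rw [hconj]
        exact mul_mem (mul_mem h1 h2) (inv_mem h1)
  rw [eq_top_iff, ← Equiv.Perm.closure_isSwap, Subgroup.closure_le]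
  rintro t ⟨i, j, hij, rfl⟩
  obtain ⟨w⟩ := hconn.preconnected i j
  exact key w hij

lemma cayley_connected (hT : ∀ t ∈ T, Equiv.Perm.IsSwap t)
    (hconn : (transGraph T).Connected) : (cayley T).Connected := by
  have hreach : ∀ g : Equiv.Perm (Fin n), (cayley T).Reachable 1 g := by
    intro g
    have hg : g ∈ Subgroup.closure T := by rw [closure_T_top T hconn]; trivial
    induction hg using Subgroup.closure_induction with
    | mem t ht =>
      have hne : (1 : Equiv.Perm (Fin n)) ≠ t := by
        obtain ⟨i, j, hij, rfl⟩ := hT t ht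
        intro h
        exact hij (by rw [← Equiv.swap_apply_left i j, ← h]; rfl)
      exact ((cayley_adj T hT).2 ⟨hne, t, ht, (one_mul t).symm⟩).reachable
    | one => exact SimpleGraph.Reachable.refl 1
    | mul x y hx hy ihx ihy =>
      have h2 : (cayley T).Reachable (x * 1) (x * y) :=
        SimpleGraph.Reachable.map (mulLeftIso T x).toHom ihy
      rw [mul_one] at h2
      exact ihx.trans h2
    | inv x hx ihx =>
      have h2 : (cayley T).Reachable (x⁻¹ * 1) (x⁻¹ * x) :=
        SimpleGraph.Reachable.map (mulLeftIso T x⁻¹).toHom ihx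
      rw [mul_one, inv_mul_cancel] at h2
      exact h2.symm
  rw [SimpleGraph.connected_iff]
  exact ⟨fun g h => (hreach g).symm.trans (hreach h), ⟨1⟩⟩

lemma reach_isolated {W : Type*} (G' : SimpleGraph W) (u : W)
    (hiso : ∀ z, ¬ G'.Adj u z) {y : W} (r : G'.Reachable u y) : y = u := by
  obtain ⟨w⟩ := r
  cases w with
  | nil => rfl
  | cons h p => exact absurd h (hiso _)

end CayleyApp

open Finset

namespace Stmt18Aux

variable {V : Type*} [Fintype V] [DecidableEq V]

/-- External neighborhood of a finset of vertices. -/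
def nbhd (G : SimpleGraph V) [DecidableRel G.Adj] (A : Finset V) : Finset V :=
  Finset.univ.filter (fun v => v ∉ A ∧ ∃ a ∈ A, G.Adj v a)

/-- The rest of the graph beyond `A` and its neighborhood. -/
def cofrag (G : SimpleGraph V) [DecidableRel G.Adj] (A : Finset V) : Finset V :=
  (A ∪ nbhd G A)ᶜ

/-- `A` is a "separating configuration": both `A` and the far side are nonempty. -/
def Sepa (G : SimpleGraph V) [DecidableRel G.Adj] (A : Finset V) : Prop :=
  A.Nonempty ∧ (cofrag G A).Nonempty

/-- Minimum size of the neighborhood of a separating configuration. -/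
noncomputable def kap (G : SimpleGraph V) [DecidableRel G.Adj] : ℕ :=
  sInf ((fun A => (nbhd G A).card) '' {A | Sepa G A})

def IsFrag (G : SimpleGraph V) [DecidableRel G.Adj] (A : Finset V) : Prop :=
  Sepa G A ∧ (nbhd G A).card = kap G

noncomputable def atomSize (G : SimpleGraph V) [DecidableRel G.Adj] : ℕ :=
  sInf (Finset.card '' {A | IsFrag G A})

variable {G : SimpleGraph V} [DecidableRel G.Adj]

lemma mem_nbhd {A : Finset V} {v : V} :
    v ∈ nbhd G A ↔ v ∉ A ∧ ∃ a ∈ A, G.Adj v a := by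
  simp [nbhd]

lemma mem_cofrag {A : Finset V} {v : V} :
    v ∈ cofrag G A ↔ v ∉ A ∧ v ∉ nbhd G A := by
  simp [cofrag, not_or]

lemma disj_nbhd (A : Finset V) : Disjoint A (nbhd G A) := by
  rw [Finset.disjoint_left]
  intro x hx hx'
  exact (mem_nbhd.1 hx').1 hx

lemma disj_cofrag (A : Finset V) : Disjoint A (cofrag G A) := by
  rw [Finset.disjoint_left]
  intro x hx hx'
  exact (mem_cofrag.1 hx').1 hx

lemma disj_nbhd_cofrag (A : Finset V) : Disjoint (nbhd G A) (cofrag G A) := by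
  rw [Finset.disjoint_left]
  intro x hx hx'
  exact (mem_cofrag.1 hx').2 hx

lemma mem_tri (A : Finset V) (x : V) : x ∈ A ∨ x ∈ nbhd G A ∨ x ∈ cofrag G A := by
  by_cases h1 : x ∈ A
  · exact Or.inl h1
  by_cases h2 : x ∈ nbhd G A
  · exact Or.inr (Or.inl h2)
  exact Or.inr (Or.inr (mem_cofrag.2 ⟨h1, h2⟩))

lemma kap_le {A : Finset V} (hA : Sepa G A) : kap G ≤ (nbhd G A).card :=
  Nat.sInf_le ⟨A, hA, rfl⟩

lemma frag_exists {A : Finset V} (hA : Sepa G A) : ∃ B, IsFrag G B := by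
  have h : kap G ∈ ((fun A => (nbhd G A).card) '' {A | Sepa G A}) :=
    Nat.sInf_mem ⟨_, A, hA, rfl⟩
  obtain ⟨B, hB, hc⟩ := h
  exact ⟨B, hB, hc⟩

lemma atom_le {A : Finset V} (hA : IsFrag G A) : atomSize G ≤ A.card :=
  Nat.sInf_le ⟨A, hA, rfl⟩

lemma atom_exists {A : Finset V} (hA : IsFrag G A) :
    ∃ B, IsFrag G B ∧ B.card = atomSize G := by
  have h : atomSize G ∈ (Finset.card '' {A | IsFrag G A}) :=
    Nat.sInf_mem ⟨_, A, hA, rfl⟩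
  obtain ⟨B, hB, hc⟩ := h
  exact ⟨B, hB, hc⟩

lemma cofrag_union_nbhd (A : Finset V) : cofrag G A ∪ nbhd G A = Aᶜ := by
  ext x
  simp only [Finset.mem_union, mem_cofrag, Finset.mem_compl]
  constructor
  · rintro (⟨h1, _⟩ | h)
    · exact h1
    · exact (mem_nbhd.1 h).1
  · intro hx
    by_cases h2 : x ∈ nbhd G A
    · exact Or.inr h2
    · exact Or.inl ⟨hx, h2⟩

lemma cofrag_frag {A : Finset V} (hA : IsFrag G A) :
    IsFrag G (cofrag G A) ∧ nbhd G (cofrag G A) = nbhd G A ∧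
      cofrag G (cofrag G A) = A := by
  have hsub : nbhd G (cofrag G A) ⊆ nbhd G A := by
    intro v hv
    obtain ⟨hvn, u, hu, hadj⟩ := mem_nbhd.1 hv
    have hvA : v ∈ A ∪ nbhd G A := by
      by_contra h
      exact hvn (by simpa [cofrag] using h)
    rcases Finset.mem_union.1 hvA with h | h
    · exfalso
      have : u ∈ nbhd G A := mem_nbhd.2 ⟨(mem_cofrag.1 hu).1, v, h, hadj.symm⟩
      exact (mem_cofrag.1 hu).2 this
    · exact h
  have hAsub : A ⊆ cofrag G (cofrag G A) := by
    intro x hx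
    refine mem_cofrag.2 ⟨?_, ?_⟩
    · exact fun h => (Finset.disjoint_left.1 (disj_cofrag A)) hx h
    · exact fun h => (Finset.disjoint_left.1 (disj_nbhd A)) hx (hsub h)
  have hsepa : Sepa G (cofrag G A) := ⟨hA.1.2, hA.1.1.mono hAsub⟩
  have hk1 : kap G ≤ (nbhd G (cofrag G A)).card := kap_le hsepa
  have hk2 : (nbhd G (cofrag G A)).card ≤ kap G := hA.2 ▸ Finset.card_le_card hsub
  have hcA : (nbhd G A).card = kap G := hA.2
  have heq : nbhd G (cofrag G A) = nbhd G A :=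
    Finset.eq_of_subset_of_card_le hsub (by omega)
  have hco : cofrag G (cofrag G A) = A := by
    have : cofrag G (cofrag G A) = (cofrag G A ∪ nbhd G A)ᶜ := by
      rw [cofrag, heq]
    rw [this, cofrag_union_nbhd, compl_compl]
  exact ⟨⟨hsepa, by omega⟩, heq, hco⟩

lemma neighborFinset_subset {B : Finset V} {w : V} (hw : w ∈ B) :
    G.neighborFinset w ⊆ B ∪ nbhd G B := by
  intro u hu
  rw [SimpleGraph.mem_neighborFinset] at hu
  by_cases h : u ∈ B
  · exact Finset.mem_union_left _ h
  · exact Finset.mem_union_right _ (mem_nbhd.2 ⟨h, w, hw, hu.symm⟩)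

lemma frag_large {d : ℕ} (hreg : ∀ v, G.degree v = d)
    (htf : ∀ a b c, G.Adj a b → G.Adj b c → G.Adj a c → False)
    (hlt : kap G < d) {B : Finset V} (hB : IsFrag G B) :
    2 * d ≤ B.card + kap G := by
  obtain ⟨⟨hBne, _⟩, hcard⟩ := hB
  obtain ⟨v, hv⟩ := hBne
  have hNv : G.neighborFinset v ⊆ B ∪ nbhd G B := neighborFinset_subset hv
  have hdv : (G.neighborFinset v).card = d := hreg v
  have hsplit : (G.neighborFinset v).card ≤
      (G.neighborFinset v ∩ B).card + (nbhd G B).card := by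
    have h1 : G.neighborFinset v ⊆ (G.neighborFinset v ∩ B) ∪ nbhd G B := by
      intro u hu
      rcases Finset.mem_union.1 (hNv hu) with h | h
      · exact Finset.mem_union_left _ (Finset.mem_inter.2 ⟨hu, h⟩)
      · exact Finset.mem_union_right _ h
    calc (G.neighborFinset v).card ≤ ((G.neighborFinset v ∩ B) ∪ nbhd G B).card :=
          Finset.card_le_card h1
      _ ≤ _ := Finset.card_union_le _ _
  have hpos : 0 < (G.neighborFinset v ∩ B).card := by omega
  obtain ⟨u, hu⟩ := Finset.card_pos.1 hpos
  obtain ⟨huv, huB⟩ := Finset.mem_inter.1 hu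
  rw [SimpleGraph.mem_neighborFinset] at huv
  have hdisj : Disjoint (G.neighborFinset u) (G.neighborFinset v) := by
    rw [Finset.disjoint_left]
    intro w hwu hwv
    rw [SimpleGraph.mem_neighborFinset] at hwu hwv
    exact htf v u w huv hwu hwv
  have hcup : (G.neighborFinset u) ∪ (G.neighborFinset v) ⊆ B ∪ nbhd G B :=
    Finset.union_subset (neighborFinset_subset huB) hNv
  have h2d : (G.neighborFinset u).card + (G.neighborFinset v).card ≤
      (B ∪ nbhd G B).card := by
    rw [← Finset.card_union_of_disjoint hdisj]
    exact Finset.card_le_card hcup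
  have hdu : (G.neighborFinset u).card = d := hreg u
  rw [Finset.card_union_of_disjoint (disj_nbhd B)] at h2d
  omega

lemma triple {P Q R W : Finset V} (hP : P ⊆ W) (hQ : Q ⊆ W) (hR : R ⊆ W)
    (hPQ : Disjoint P Q) (hPR : Disjoint P R) (hQR : Disjoint Q R) :
    P.card + Q.card + R.card ≤ W.card := by
  have h1 : (P ∪ Q ∪ R).card = P.card + Q.card + R.card := by
    rw [Finset.card_union_of_disjoint (by rw [Finset.disjoint_union_left]; exact ⟨hPR, hQR⟩),
      Finset.card_union_of_disjoint hPQ]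
  calc P.card + Q.card + R.card = (P ∪ Q ∪ R).card := h1.symm
    _ ≤ W.card := Finset.card_le_card (by
        apply Finset.union_subset (Finset.union_subset hP hQ) hR)

lemma corner {X Y : Finset V} (hC : (X ∩ Y).Nonempty)
    (hop : (cofrag G X ∩ cofrag G Y).Nonempty)
    (hX : IsFrag G X) (hY : IsFrag G Y) :
    kap G ≤ (X ∩ nbhd G Y).card + (nbhd G X ∩ Y).card + (nbhd G X ∩ nbhd G Y).card ∧
    ((X ∩ Y).card < atomSize G →
      kap G + 1 ≤ (X ∩ nbhd G Y).card + (nbhd G X ∩ Y).card + (nbhd G X ∩ nbhd G Y).card) := by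
  obtain ⟨w, hw⟩ := hop
  obtain ⟨hw1, hw2⟩ := Finset.mem_inter.1 hw
  have hTsub : nbhd G (X ∩ Y) ⊆
      (X ∩ nbhd G Y) ∪ ((nbhd G X ∩ Y) ∪ (nbhd G X ∩ nbhd G Y)) := by
    intro v hv
    obtain ⟨hvn, u, hu, hadj⟩ := mem_nbhd.1 hv
    obtain ⟨huX, huY⟩ := Finset.mem_inter.1 hu
    have hvX : v ∈ X ∨ v ∈ nbhd G X := by
      by_cases h : v ∈ X
      · exact Or.inl h
      · exact Or.inr (mem_nbhd.2 ⟨h, u, huX, hadj⟩)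
    have hvY : v ∈ Y ∨ v ∈ nbhd G Y := by
      by_cases h : v ∈ Y
      · exact Or.inl h
      · exact Or.inr (mem_nbhd.2 ⟨h, u, huY, hadj⟩)
    rcases hvX with h1 | h1 <;> rcases hvY with h2 | h2
    · exact absurd (Finset.mem_inter.2 ⟨h1, h2⟩) hvn
    · exact Finset.mem_union_left _ (Finset.mem_inter.2 ⟨h1, h2⟩)
    · exact Finset.mem_union_right _ (Finset.mem_union_left _ (Finset.mem_inter.2 ⟨h1, h2⟩))
    · exact Finset.mem_union_right _ (Finset.mem_union_right _ (Finset.mem_inter.2 ⟨h1, h2⟩))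
  have hwco : w ∈ cofrag G (X ∩ Y) := by
    refine mem_cofrag.2 ⟨?_, ?_⟩
    · intro h
      exact (mem_cofrag.1 hw1).1 (Finset.mem_inter.1 h).1
    · intro h
      rcases Finset.mem_union.1 (hTsub h) with h' | h'
      · exact (mem_cofrag.1 hw1).1 (Finset.mem_inter.1 h').1
      rcases Finset.mem_union.1 h' with h'' | h''
      · exact (mem_cofrag.1 hw2).1 (Finset.mem_inter.1 h'').2
      · exact (mem_cofrag.1 hw1).2 (Finset.mem_inter.1 h'').1
  have hsepa : Sepa G (X ∩ Y) := ⟨hC, ⟨w, hwco⟩⟩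
  have h1 : kap G ≤ (nbhd G (X ∩ Y)).card := kap_le hsepa
  have h2 : (nbhd G (X ∩ Y)).card ≤
      (X ∩ nbhd G Y).card + (nbhd G X ∩ Y).card + (nbhd G X ∩ nbhd G Y).card := by
    calc (nbhd G (X ∩ Y)).card
        ≤ ((X ∩ nbhd G Y) ∪ ((nbhd G X ∩ Y) ∪ (nbhd G X ∩ nbhd G Y))).card :=
          Finset.card_le_card hTsub
      _ ≤ (X ∩ nbhd G Y).card + ((nbhd G X ∩ Y) ∪ (nbhd G X ∩ nbhd G Y)).card :=
          Finset.card_union_le _ _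
      _ ≤ _ := by
          have := Finset.card_union_le (nbhd G X ∩ Y) (nbhd G X ∩ nbhd G Y)
          omega
  refine ⟨by omega, fun hsmall => ?_⟩
  rcases Nat.lt_or_ge (kap G) ((nbhd G (X ∩ Y)).card) with h | h
  · omega
  · exfalso
    have hfrag : IsFrag G (X ∩ Y) := ⟨hsepa, by omega⟩
    have := atom_le hfrag
    omega

lemma atom_subset {d : ℕ} (hreg : ∀ v, G.degree v = d)
    (htf : ∀ a b c, G.Adj a b → G.Adj b c → G.Adj a c → False)
    (hlt : kap G < d) {A B : Finset V} (hA : IsFrag G A) (hAsz : A.card = atomSize G)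
    (hB : IsFrag G B) (hne : (A ∩ B).Nonempty) : A ⊆ B := by
  by_contra hns
  obtain ⟨x, hxA, hxB⟩ := Finset.not_subset.1 hns
  obtain ⟨z, hz⟩ := hne
  obtain ⟨hzA, hzB⟩ := Finset.mem_inter.1 hz
  have hABlt : (A ∩ B).card < atomSize G := by
    rw [← hAsz]
    refine Finset.card_lt_card ⟨Finset.inter_subset_left, fun hsub => ?_⟩
    exact hxB (Finset.mem_inter.1 (hsub hxA)).2
  have hcoA := cofrag_frag hA
  have hcoB := cofrag_frag hB
  -- the two "grouping" inequalities, valid in all cases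
  have s1 : (A ∩ nbhd G B).card + (cofrag G A ∩ nbhd G B).card +
      (nbhd G A ∩ nbhd G B).card ≤ kap G := by
    rw [← hB.2]
    exact triple Finset.inter_subset_right Finset.inter_subset_right
      Finset.inter_subset_right
      ((disj_cofrag A).mono Finset.inter_subset_left Finset.inter_subset_left)
      ((disj_nbhd A).mono Finset.inter_subset_left Finset.inter_subset_left)
      (((disj_nbhd_cofrag A).symm).mono Finset.inter_subset_left Finset.inter_subset_left)
  have s2 : (nbhd G A ∩ B).card + (nbhd G A ∩ cofrag G B).card +
      (nbhd G A ∩ nbhd G B).card ≤ kap G := by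
    rw [← hA.2]
    exact triple Finset.inter_subset_left Finset.inter_subset_left
      Finset.inter_subset_left
      ((disj_cofrag B).mono Finset.inter_subset_right Finset.inter_subset_right)
      ((disj_nbhd B).mono Finset.inter_subset_right Finset.inter_subset_right)
      (((disj_nbhd_cofrag B).symm).mono Finset.inter_subset_right Finset.inter_subset_right)
  by_cases h1 : (cofrag G A ∩ cofrag G B).Nonempty
  · have c1 := (corner ⟨z, hz⟩ h1 hA hB).2 hABlt
    have c2 := (corner h1 (by rw [hcoA.2.2, hcoB.2.2]; exact ⟨z, hz⟩) hcoA.1 hcoB.1).1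
    rw [hcoA.2.1, hcoB.2.1] at c2
    omega
  · by_cases h2 : (A ∩ cofrag G B).Nonempty
    · by_cases h3 : (cofrag G A ∩ B).Nonempty
      · have hsmall2 : (A ∩ cofrag G B).card < atomSize G := by
          rw [← hAsz]
          refine Finset.card_lt_card ⟨Finset.inter_subset_left, fun hsub => ?_⟩
          have h' := (Finset.mem_inter.1 (hsub hzA)).2
          exact Finset.disjoint_left.1 (disj_cofrag B) hzB h'
        have c1 := (corner h2 (by rw [hcoB.2.2]; exact h3) hA hcoB.1).2 hsmall2
        rw [hcoB.2.1] at c1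
        have c2 := (corner h3 (by rw [hcoA.2.2]; exact h2) hcoA.1 hB).1
        rw [hcoA.2.1] at c2
        omega
      · -- cofrag A ⊆ nbhd B
        have hsub : cofrag G A ⊆ nbhd G B := by
          intro y hy
          rcases mem_tri (G := G) B y with h | h | h
          · exact absurd ⟨y, Finset.mem_inter.2 ⟨hy, h⟩⟩ h3
          · exact h
          · exact absurd ⟨y, Finset.mem_inter.2 ⟨hy, h⟩⟩ h1
        have hlarge := frag_large hreg htf hlt hcoA.1
        have hle : (cofrag G A).card ≤ kap G := hB.2 ▸ Finset.card_le_card hsub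
        omega
    · -- cofrag B ⊆ nbhd A
      have hsub : cofrag G B ⊆ nbhd G A := by
        intro y hy
        rcases mem_tri (G := G) A y with h | h | h
        · exact absurd ⟨y, Finset.mem_inter.2 ⟨h, hy⟩⟩ h2
        · exact h
        · exact absurd ⟨y, Finset.mem_inter.2 ⟨h, hy⟩⟩ h1
      have hlarge := frag_large hreg htf hlt hcoB.1
      have hle : (cofrag G B).card ≤ kap G := hA.2 ▸ Finset.card_le_card hsub
      omega

lemma frag_image (φ : G ≃g G) {A : Finset V} (hA : IsFrag G A) :
    IsFrag G (A.image ⇑φ) ∧ (A.image ⇑φ).card = A.card := by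
  have hinj : Function.Injective ⇑φ := fun a b h => φ.toEquiv.injective h
  have hnb : nbhd G (A.image ⇑φ) = (nbhd G A).image ⇑φ := by
    ext v
    obtain ⟨w, rfl⟩ := φ.toEquiv.surjective v
    constructor
    · intro hmem
      obtain ⟨hnv, a, ha, hadj⟩ := mem_nbhd.1 hmem
      obtain ⟨b, hb, rfl⟩ := Finset.mem_image.1 ha
      have hw : w ∈ nbhd G A := mem_nbhd.2
        ⟨fun h => hnv (Finset.mem_image_of_mem _ h), b, hb, φ.map_adj_iff.1 hadj⟩
      exact Finset.mem_image_of_mem _ hw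
    · intro hmem
      obtain ⟨u, hu, huw⟩ := Finset.mem_image.1 hmem
      have : u = w := hinj huw
      subst this
      refine mem_nbhd.2 ⟨?_, ?_⟩
      · intro hmem'
        obtain ⟨b, hb, hbw⟩ := Finset.mem_image.1 hmem'
        have : b = u := hinj hbw
        subst this
        exact (mem_nbhd.1 hu).1 hb
      · obtain ⟨a, ha, hadj⟩ := (mem_nbhd.1 hu).2
        exact ⟨φ a, Finset.mem_image_of_mem _ ha, φ.map_adj_iff.2 hadj⟩
  have hcardim : (A.image ⇑φ).card = A.card := Finset.card_image_of_injective _ hinj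
  have hcard : (A.image ⇑φ ∪ nbhd G (A.image ⇑φ)).card = (A ∪ nbhd G A).card := by
    rw [hnb, ← Finset.image_union, Finset.card_image_of_injective _ hinj]
  have h0 : 0 < (cofrag G A).card := Finset.card_pos.2 hA.1.2
  rw [cofrag, Finset.card_compl] at h0
  have h1 : 0 < (cofrag G (A.image ⇑φ)).card := by
    rw [cofrag, Finset.card_compl, hcard]
    omega
  have hkap : (nbhd G (A.image ⇑φ)).card = kap G := by
    rw [hnb, Finset.card_image_of_injective _ hinj, hA.2]
  exact ⟨⟨⟨hA.1.1.image _, Finset.card_pos.1 h1⟩, hkap⟩, hcardim⟩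

lemma walk_stay {A : Finset V} (hN : nbhd G A = ∅) :
    ∀ {x y : V}, G.Walk x y → x ∈ A → y ∈ A := by
  intro x y w
  induction w with
  | nil => exact id
  | @cons a b c h p ih =>
    intro hx
    apply ih
    by_contra hb
    have : b ∈ nbhd G A := mem_nbhd.2 ⟨hb, a, hx, h.symm⟩
    simp [hN] at this

theorem mader_bound (G : SimpleGraph V) [DecidableRel G.Adj] {d : ℕ}
    (hreg : ∀ v, G.degree v = d)
    (htf : ∀ a b c, G.Adj a b → G.Adj b c → G.Adj a c → False)
    (htr : ∀ u v : V, ∃ φ : G ≃g G, φ u = v)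
    (hc : G.Connected)
    {A : Finset V} (hA : Sepa G A) : d ≤ (nbhd G A).card := by
  have hk : kap G ≤ (nbhd G A).card := kap_le hA
  by_contra hcon
  push_neg at hcon
  have hlt : kap G < d := by omega
  obtain ⟨B₀, hB₀⟩ := frag_exists hA
  obtain ⟨A₀, hA₀, hA₀sz⟩ := atom_exists hB₀
  have hcoA₀ := cofrag_frag hA₀
  have hNne : (nbhd G A₀).Nonempty := by
    rw [Finset.nonempty_iff_ne_empty]
    intro hN
    obtain ⟨a, ha⟩ := hA₀.1.1
    obtain ⟨b, hb⟩ := hA₀.1.2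
    obtain ⟨w⟩ := hc.preconnected a b
    have hbA := walk_stay hN w ha
    exact Finset.disjoint_left.1 (disj_cofrag A₀) hbA hb
  obtain ⟨v, hv⟩ := hNne
  obtain ⟨a₀, ha₀⟩ := hA₀.1.1
  obtain ⟨φ, hφ⟩ := htr a₀ v
  obtain ⟨hBfrag, hBcard⟩ := frag_image φ hA₀
  have hBatom : (A₀.image ⇑φ).card = atomSize G := by rw [hBcard, hA₀sz]
  have hvB : v ∈ A₀.image ⇑φ := by rw [← hφ]; exact Finset.mem_image_of_mem _ ha₀
  have hsubN : A₀.image ⇑φ ⊆ nbhd G A₀ := by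
    intro x hx
    rcases mem_tri (G := G) A₀ x with h | h | h
    · exfalso
      have hss := atom_subset hreg htf hlt hBfrag hBatom hA₀
        ⟨x, Finset.mem_inter.2 ⟨hx, h⟩⟩
      exact Finset.disjoint_left.1 (disj_nbhd A₀) (hss hvB) hv
    · exact h
    · exfalso
      have hss := atom_subset hreg htf hlt hBfrag hBatom hcoA₀.1
        ⟨x, Finset.mem_inter.2 ⟨hx, h⟩⟩
      exact Finset.disjoint_left.1 (disj_nbhd_cofrag A₀) hv (hss hvB)
  have h1 : atomSize G ≤ kap G := by
    rw [← hBatom]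
    calc (A₀.image ⇑φ).card ≤ (nbhd G A₀).card := Finset.card_le_card hsubN
      _ = kap G := hA₀.2
  have h2 := frag_large hreg htf hlt hA₀
  omega

end Stmt18Aux

/-- For `n ≥ 3` and a set `𝒯` of transpositions of `Sym(n)` whose generating graph is
connected with `m` edges, the Cayley graph `Cay(Sym(n), 𝒯)` is maximally connected:
its vertex connectivity equals `m`, its common vertex degree. -/
theorem stmt18 (n m : ℕ) (hn : 3 ≤ n)
    (T : Set (Equiv.Perm (Fin n))) (hT : ∀ t ∈ T, Equiv.Perm.IsSwap t)
    (hconn : (transGraph T).Connected)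
    (hm : (transGraph T).edgeSet.ncard = m) :
    vertexConn (cayley T) = m := by
  classical
  haveI : DecidableRel (cayley T).Adj := Classical.decRel _
  have hmT : T.ncard = m := by rw [T_ncard_eq T hT, hm]
  have hreg : ∀ g, (cayley T).degree g = m := fun g => by
    rw [cayley_degree T hT g, hmT]
  have htf := cayley_tf T hT
  have htr : ∀ u v : Equiv.Perm (Fin n), ∃ φ : cayley T ≃g cayley T, φ u = v :=
    fun u v => ⟨mulLeftIso T (v * u⁻¹), by simp [mulLeftIso]⟩
  have hcayconn := cayley_connected T hT hconn
  have h1T : (1 : Equiv.Perm (Fin n)) ∉ T := by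
    intro h
    obtain ⟨i, j, hij, hswap⟩ := hT 1 h
    exact hij (by rw [← Equiv.swap_apply_left i j, ← hswap, Equiv.Perm.one_apply])
  set x0 : Fin n := ⟨0, by omega⟩ with hx0
  set x1 : Fin n := ⟨1, by omega⟩ with hx1
  set x2 : Fin n := ⟨2, by omega⟩ with hx2
  have h01 : x0 ≠ x1 := by simp [hx0, hx1, Fin.ext_iff]
  have h12 : x1 ≠ x2 := by simp [hx1, hx2, Fin.ext_iff]
  have h02 : x0 ≠ x2 := by simp [hx0, hx2, Fin.ext_iff]
  set c : Equiv.Perm (Fin n) := Equiv.swap x0 x1 * Equiv.swap x1 x2 with hc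
  have hcT : c ∉ T := by
    intro h
    obtain ⟨i, j, hij, hswap⟩ := hT c h
    have hs : Equiv.Perm.sign c = 1 := by
      rw [hc, map_mul, Equiv.Perm.sign_swap h01, Equiv.Perm.sign_swap h12]
      decide
    rw [hswap, Equiv.Perm.sign_swap hij] at hs
    exact absurd hs (by decide)
  have hcx2 : c x2 = x0 := by
    rw [hc, Equiv.Perm.mul_apply, Equiv.swap_apply_right, Equiv.swap_apply_right]
  have hc1 : c ≠ 1 := by
    intro h
    exact h02 (by rw [← hcx2, h, Equiv.Perm.one_apply])
  have hdisc : ¬ ((cayley T).induce ((T : Set (Equiv.Perm (Fin n)))ᶜ)).Connected := by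
    intro hcon
    have h1mem : (1 : Equiv.Perm (Fin n)) ∈ (Tᶜ : Set (Equiv.Perm (Fin n))) := h1T
    have hcmem : c ∈ (Tᶜ : Set (Equiv.Perm (Fin n))) := hcT
    have hiso : ∀ z, ¬ ((cayley T).induce (Tᶜ : Set (Equiv.Perm (Fin n)))).Adj ⟨1, h1mem⟩ z := by
      rintro ⟨z, hz⟩ hadj
      have hadj' : (cayley T).Adj 1 z := hadj
      obtain ⟨hne, t, ht, rfl⟩ := (cayley_adj T hT).1 hadj'
      exact hz (by rw [one_mul]; exact ht)
    have hyx := reach_isolated _ _ hiso (hcon.preconnected ⟨1, h1mem⟩ ⟨c, hcmem⟩)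
    exact hc1 (congrArg Subtype.val hyx)
  have hmem : m ∈ {k : ℕ | ∃ S : Set (Equiv.Perm (Fin n)), S.ncard = k ∧
      (¬ ((cayley T).induce (Sᶜ : Set (Equiv.Perm (Fin n)))).Connected ∨
        (Sᶜ : Set (Equiv.Perm (Fin n))).ncard < 2)} :=
    ⟨T, hmT, Or.inl hdisc⟩
  have hTm : T.toFinset.card = m := by rw [← Set.ncard_eq_toFinset_card', hmT]
  have hNT : m + 2 ≤ Fintype.card (Equiv.Perm (Fin n)) := by
    have hcnotin : c ∉ T.toFinset := fun h => hcT (Set.mem_toFinset.1 h)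
    have h1notin : (1 : Equiv.Perm (Fin n)) ∉ insert c T.toFinset := by
      rw [Finset.mem_insert]
      rintro (h | h)
      · exact hc1 h.symm
      · exact h1T (Set.mem_toFinset.1 h)
    calc m + 2 = (insert (1 : Equiv.Perm (Fin n)) (insert c T.toFinset)).card := by
          rw [Finset.card_insert_of_notMem h1notin, Finset.card_insert_of_notMem hcnotin, hTm]
      _ ≤ (Finset.univ : Finset (Equiv.Perm (Fin n))).card :=
          Finset.card_le_card (Finset.subset_univ _)
      _ = _ := Finset.card_univ
  have hbound : ∀ k ∈ {k : ℕ | ∃ S : Set (Equiv.Perm (Fin n)), S.ncard = k ∧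
      (¬ ((cayley T).induce (Sᶜ : Set (Equiv.Perm (Fin n)))).Connected ∨
        (Sᶜ : Set (Equiv.Perm (Fin n))).ncard < 2)}, m ≤ k := by
    rintro k ⟨S, hScard, hcond⟩
    have hSsplit : S.ncard + Sᶜ.ncard = Fintype.card (Equiv.Perm (Fin n)) := by
      rw [Set.ncard_add_ncard_compl, Nat.card_eq_fintype_card]
    rcases hcond with hdisc' | hlt2
    · by_cases hScEmpty : (Sᶜ : Set (Equiv.Perm (Fin n))) = ∅
      · have h0 : (Sᶜ : Set (Equiv.Perm (Fin n))).ncard = 0 := by rw [hScEmpty]; simp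
        omega
      · obtain ⟨a, ha⟩ := Set.nonempty_iff_ne_empty.2 hScEmpty
        haveI : Nonempty ↥(Sᶜ : Set (Equiv.Perm (Fin n))) := ⟨⟨a, ha⟩⟩
        have hnp : ¬ ((cayley T).induce (Sᶜ : Set (Equiv.Perm (Fin n)))).Preconnected :=
          fun hp => hdisc' ⟨hp⟩
        rw [SimpleGraph.Preconnected] at hnp
        push_neg at hnp
        obtain ⟨x, y, hxy⟩ := hnp
        set A : Finset (Equiv.Perm (Fin n)) := Finset.univ.filter
          (fun z => ∃ hz : z ∈ (Sᶜ : Set (Equiv.Perm (Fin n))),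
            ((cayley T).induce (Sᶜ : Set (Equiv.Perm (Fin n)))).Reachable x ⟨z, hz⟩) with hA
        have hxA : (x : Equiv.Perm (Fin n)) ∈ A := by
          rw [hA, Finset.mem_filter]
          refine ⟨Finset.mem_univ _, x.2, ?_⟩
          rw [Subtype.coe_eta]
        have hnb : Stmt18Aux.nbhd (cayley T) A ⊆ S.toFinset := by
          intro v hv
          obtain ⟨hvA, u, huA, hadj⟩ := Stmt18Aux.mem_nbhd.1 hv
          rw [Set.mem_toFinset]
          by_contra hvS
          have hv' : v ∈ (Sᶜ : Set (Equiv.Perm (Fin n))) := hvS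
          obtain ⟨hu', hur⟩ := (Finset.mem_filter.1 huA).2
          have hadj' : ((cayley T).induce (Sᶜ : Set (Equiv.Perm (Fin n)))).Adj ⟨u, hu'⟩ ⟨v, hv'⟩ :=
            hadj.symm
          have hvmem : v ∈ A := by
            rw [hA, Finset.mem_filter]
            exact ⟨Finset.mem_univ _, hv', hur.trans hadj'.reachable⟩
          exact hvA hvmem
        have hsepa : Stmt18Aux.Sepa (cayley T) A := by
          refine ⟨⟨(x : Equiv.Perm (Fin n)), hxA⟩, ⟨(y : Equiv.Perm (Fin n)),
            Stmt18Aux.mem_cofrag.2 ⟨?_, ?_⟩⟩⟩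
          · intro hyA
            obtain ⟨hy', hyr⟩ := (Finset.mem_filter.1 hyA).2
            apply hxy
            have heta : (⟨(y : Equiv.Perm (Fin n)), hy'⟩ : ↥(Sᶜ : Set (Equiv.Perm (Fin n)))) = y :=
              Subtype.coe_eta _ _
            rwa [heta] at hyr
          · intro hyN
            have hyS := hnb hyN
            rw [Set.mem_toFinset] at hyS
            exact y.2 hyS
        have hmain := Stmt18Aux.mader_bound (cayley T) hreg htf htr hcayconn hsepa
        have hle := Finset.card_le_card hnb
        have hSc : S.toFinset.card = k := by rw [← Set.ncard_eq_toFinset_card', hScard]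
        omega
    · omega
  apply le_antisymm
  · exact Nat.sInf_le hmem
  · exact hbound _ (Nat.sInf_mem ⟨m, hmem⟩)
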